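/- (Theorem 4.1, quadratic majorization of the logistic L₂E loss.) Let η ≥ η* := sup_{p∈[0,1]} ψ₁(p). Then for all θ, θ̃ ∈ ℝ^{p+1}: L(θ) ≤ L(θ̃) + (2/n)·(F(X̃θ̃) − y)ᵀ G_{θ̃} X̃ (θ − θ̃) + (η/(2n))·‖X̃(θ − θ̃)‖₂², where G_{θ̃} is the n×n diagonal matrix with entries (G_{θ̃})_{ii} = F(x̃ᵢᵀθ̃)(1 − F(x̃ᵢᵀθ̃)), and equality holds at θ = θ̃. -/

import Mathlib

open Finset

/-- The logistic function `F(u) = 1/(1 + exp(-u))`. -/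
noncomputable def logisticF (u : ℝ) : ℝ := 1 / (1 + Real.exp (-u))

/-- `ψ_u(p) = [2p(1−p) − (2p−1)((2p−1) − u)]·p(1−p)`. -/
def psi (u p : ℝ) : ℝ := (2*p*(1-p) - (2*p-1)*((2*p-1) - u)) * (p*(1-p))

/-- The logistic L₂E loss `L(θ) = (1/n)∑ᵢ (yᵢ − F(x̃ᵢᵀθ))²`. -/
noncomputable def L2Eloss {n p : ℕ} (X : Matrix (Fin n) (Fin (p+1)) ℝ)
    (y : Fin n → ℝ) (θ : Fin (p+1) → ℝ) : ℝ :=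
  (1/(n:ℝ)) * ∑ i, (y i - logisticF (∑ j, X i j * θ j))^2

noncomputable def gL (y u : ℝ) : ℝ := (y - logisticF u)^2
noncomputable def gL' (y u : ℝ) : ℝ :=
  2*(logisticF u - y)*(logisticF u*(1-logisticF u))
noncomputable def gL'' (y u : ℝ) : ℝ :=
  2*(logisticF u*(1-logisticF u))*(logisticF u*(1-logisticF u)
    + (logisticF u - y)*(1-2*logisticF u))

lemma logisticF_mem (u : ℝ) : logisticF u ∈ Set.Icc (0:ℝ) 1 := by
  have he : 0 < Real.exp (-u) := Real.exp_pos _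
  unfold logisticF
  constructor
  · positivity
  · rw [div_le_one (by linarith)]; linarith

lemma hasDerivAt_logisticF (u : ℝ) :
    HasDerivAt logisticF (logisticF u * (1 - logisticF u)) u := by
  have h1 : HasDerivAt (fun u : ℝ => Real.exp (-u)) (-Real.exp (-u)) u := by
    exact (by simpa using (Real.hasDerivAt_exp (-u)).comp u (hasDerivAt_neg u) :
      HasDerivAt (Real.exp ∘ Neg.neg) (-Real.exp (-u)) u)
  have hne : 1 + Real.exp (-u) ≠ 0 := by positivity
  have h3 := (h1.const_add 1).inv hne
  have hfun : logisticF = fun u : ℝ => (1 + Real.exp (-u))⁻¹ := by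
    funext v; simp [logisticF, one_div]
  rw [hfun]
  refine h3.congr_deriv ?_
  field_simp
  ring

lemma hasDerivAt_gL (y u : ℝ) : HasDerivAt (gL y) (gL' y u) u := by
  have := ((hasDerivAt_logisticF u).const_sub y).pow 2
  refine this.congr_deriv ?_
  unfold gL'; push_cast; ring

lemma hasDerivAt_gL' (y u : ℝ) : HasDerivAt (gL' y) (gL'' y u) u := by
  have hs := hasDerivAt_logisticF u
  have h1 := (hs.sub_const y).const_mul 2
  have h2 := hs.mul (hs.const_sub 1)
  have := h1.mul h2
  refine this.congr_deriv ?_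
  unfold gL''; simp only [Pi.mul_apply]; ring

lemma gL''_le {η : ℝ} (hη : sSup (psi 1 '' Set.Icc (0:ℝ) 1) ≤ η)
    {y : ℝ} (hy : y = 0 ∨ y = 1) (u : ℝ) : gL'' y u ≤ η := by
  have hc : Continuous (psi 1) := by unfold psi; continuity
  have hbdd : BddAbove (psi 1 '' Set.Icc (0:ℝ) 1) :=
    (isCompact_Icc.image hc).bddAbove
  rcases hy with hy | hy <;> subst hy
  · have heq : gL'' 0 u = psi 1 (1 - logisticF u) := by
      unfold gL'' psi; ring
    have hmem : (1 : ℝ) - logisticF u ∈ Set.Icc (0:ℝ) 1 := by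
      have := logisticF_mem u
      constructor <;> [linarith [this.2]; linarith [this.1]]
    calc gL'' 0 u = psi 1 (1 - logisticF u) := heq
      _ ≤ sSup (psi 1 '' Set.Icc (0:ℝ) 1) := le_csSup hbdd ⟨_, hmem, rfl⟩
      _ ≤ η := hη
  · have heq : gL'' 1 u = psi 1 (logisticF u) := by
      unfold gL'' psi; ring
    calc gL'' 1 u = psi 1 (logisticF u) := heq
      _ ≤ sSup (psi 1 '' Set.Icc (0:ℝ) 1) := le_csSup hbdd ⟨_, logisticF_mem u, rfl⟩
      _ ≤ η := hη

lemma quad_major {η y : ℝ} (hd2 : ∀ u, gL'' y u ≤ η) (b a : ℝ) :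
    gL y a ≤ gL y b + gL' y b * (a - b) + η/2 * (a-b)^2 := by
  set φ : ℝ → ℝ := fun u => gL y b + gL' y b * (u - b) + η/2 * (u-b)^2 - gL y u with hφdef
  set ψf : ℝ → ℝ := fun u => gL' y b + η * (u - b) - gL' y u with hψdef
  have hφ : ∀ u, HasDerivAt φ (ψf u) u := by
    intro u
    have h1 : HasDerivAt (fun u : ℝ => gL y b + gL' y b * (u - b) + η/2 * (u-b)^2)
        (gL' y b + η * (u - b)) u := by
      have ha : HasDerivAt (fun u : ℝ => gL' y b * (u - b)) (gL' y b) u := by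
        simpa using ((hasDerivAt_id u).sub_const b).const_mul (gL' y b)
      have hb : HasDerivAt (fun u : ℝ => η/2 * (u-b)^2) (η * (u - b)) u := by
        have := (((hasDerivAt_id u).sub_const b).pow 2).const_mul (η/2)
        refine this.congr_deriv ?_; simp only [id_eq]; push_cast; ring
      exact (ha.const_add (gL y b)).add hb
    exact h1.sub (hasDerivAt_gL y u)
  have hψ : ∀ u, HasDerivAt ψf (η - gL'' y u) u := by
    intro u
    have h1 : HasDerivAt (fun u : ℝ => gL' y b + η * (u - b)) η u := by
      have := (((hasDerivAt_id u).sub_const b).const_mul η).const_add (gL' y b)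
      refine this.congr_deriv ?_; simp
    exact h1.sub (hasDerivAt_gL' y u)
  have hmono : Monotone ψf :=
    monotone_of_hasDerivAt_nonneg hψ (fun u => sub_nonneg.2 (hd2 u))
  have hψb : ψf b = 0 := by simp [hψdef]
  have hφb : φ b = 0 := by simp [hφdef]
  have hφa : 0 ≤ φ a := by
    rcases lt_trichotomy a b with h | h | h
    · obtain ⟨c, hc, hc'⟩ := exists_hasDerivAt_eq_slope φ ψf h
        (fun u _ => (hφ u).continuousAt.continuousWithinAt) (fun u _ => hφ u)
      have h1 : ψf c ≤ 0 := hψb ▸ hmono hc.2.le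
      rw [hφb] at hc'
      have h3 : 0 < b - a := by linarith
      rw [eq_div_iff h3.ne'] at hc'
      nlinarith [mul_nonneg (neg_nonneg.2 h1) h3.le]
    · rw [h, hφb]
    · obtain ⟨c, hc, hc'⟩ := exists_hasDerivAt_eq_slope φ ψf h
        (fun u _ => (hφ u).continuousAt.continuousWithinAt) (fun u _ => hφ u)
      have h1 : 0 ≤ ψf c := hψb ▸ hmono hc.1.le
      rw [hφb] at hc'
      have h3 : 0 < a - b := by linarith
      rw [eq_div_iff h3.ne'] at hc'
      nlinarith [mul_nonneg h1 h3.le]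
  simp only [hφdef] at hφa
  linarith

/-- Theorem 4.1, quadratic majorization of the logistic L₂E loss: if
`η ≥ η* = sup_{p∈[0,1]} ψ₁(p)`, then for all `θ, θ̃`,
`L(θ) ≤ L(θ̃) + (2/n)(F(X̃θ̃) − y)ᵀ G_{θ̃} X̃ (θ − θ̃) + (η/(2n))‖X̃(θ − θ̃)‖₂²`,
with equality at `θ = θ̃`. -/
theorem stmt_6 (n p : ℕ) (hn : 0 < n)
    (X : Matrix (Fin n) (Fin (p+1)) ℝ) (y : Fin n → ℝ)
    (hy : ∀ i, y i = 0 ∨ y i = 1)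
    (η : ℝ) (hη : sSup (psi 1 '' Set.Icc (0:ℝ) 1) ≤ η)
    (θ θt : Fin (p+1) → ℝ) :
    L2Eloss X y θ ≤
      L2Eloss X y θt
        + (2/(n:ℝ)) * ∑ i,
            (logisticF (∑ j, X i j * θt j) - y i)
              * (logisticF (∑ j, X i j * θt j) * (1 - logisticF (∑ j, X i j * θt j)))
              * (∑ j, X i j * (θ j - θt j))
        + (η/(2*(n:ℝ))) * ∑ i, (∑ j, X i j * (θ j - θt j))^2 ∧
    L2Eloss X y θt =
      L2Eloss X y θt
        + (2/(n:ℝ)) * ∑ i,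
            (logisticF (∑ j, X i j * θt j) - y i)
              * (logisticF (∑ j, X i j * θt j) * (1 - logisticF (∑ j, X i j * θt j)))
              * (∑ j, X i j * (θt j - θt j))
        + (η/(2*(n:ℝ))) * ∑ i, (∑ j, X i j * (θt j - θt j))^2 := by
  have hn' : (n:ℝ) ≠ 0 := Nat.cast_ne_zero.2 hn.ne'
  constructor
  · set a : Fin n → ℝ := fun i => ∑ j, X i j * θ j with ha
    set b : Fin n → ℝ := fun i => ∑ j, X i j * θt j with hb
    have hΔ : ∀ i, ∑ j, X i j * (θ j - θt j) = a i - b i := by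
      intro i
      rw [ha, hb, ← Finset.sum_sub_distrib]
      exact Finset.sum_congr rfl fun j _ => by ring
    have key : ∀ i, (y i - logisticF (a i))^2 ≤
        (y i - logisticF (b i))^2 + gL' (y i) (b i) * (a i - b i)
          + η/2 * (a i - b i)^2 :=
      fun i => quad_major (gL''_le hη (hy i)) (b i) (a i)
    have h1 : L2Eloss X y θ ≤ (1/(n:ℝ)) * ∑ i,
        ((y i - logisticF (b i))^2 + gL' (y i) (b i) * (a i - b i)
          + η/2 * (a i - b i)^2) := by
      unfold L2Eloss
      exact mul_le_mul_of_nonneg_left (Finset.sum_le_sum fun i _ => key i)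
        (by positivity)
    refine h1.trans (le_of_eq ?_)
    rw [Finset.sum_add_distrib, Finset.sum_add_distrib]
    have e2 : ∑ i, gL' (y i) (b i) * (a i - b i)
        = 2 * ∑ i, (logisticF (b i) - y i)
            * (logisticF (b i) * (1 - logisticF (b i))) * (a i - b i) := by
      rw [Finset.mul_sum]
      exact Finset.sum_congr rfl fun i _ => by unfold gL'; ring
    have e3 : ∑ i, η/2 * (a i - b i)^2 = η/2 * ∑ i, (a i - b i)^2 :=
      (Finset.mul_sum _ _ _).symm
    rw [e2, e3]
    unfold L2Eloss
    simp only [hΔ]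
    field_simp
    ring
  · simp
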